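/- Fix q > 1 and y > 0. If 1 < p₁ < p₂ and x₁, x₂ ∈ (0,1) satisfy ∫_0^{x₁} (1-t^q)^{-1/p₁} dt = y and ∫_0^{x₂} (1-t^q)^{-1/p₂} dt = y, then x₁ < x₂. In other words, the function p ↦ sin_{p,q}(y) is increasing on (1,∞). -/
import Mathlib

open MeasureTheory

private lemma sinpq_cont (q p x : ℝ) (hq : 0 < q) (hx1 : x < 1) :
    ContinuousOn (fun t : ℝ => (1 - t ^ q) ^ (-(1 / p))) (Set.Icc 0 x) := by
  have hbase : ContinuousOn (fun t : ℝ => 1 - t ^ q) (Set.Icc 0 x) :=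
    continuousOn_const.sub (continuousOn_id.rpow_const fun t ht => Or.inr hq.le)
  refine hbase.rpow_const fun t ht => Or.inl ?_
  have ht1 : t ^ q < 1 := Real.rpow_lt_one ht.1 (lt_of_le_of_lt ht.2 hx1) hq
  linarith

theorem sin_pq_increasing_in_p (q y : ℝ) (hq : 1 < q) (hy : 0 < y)
    (p₁ p₂ x₁ x₂ : ℝ) (hp₁ : 1 < p₁) (hp : p₁ < p₂)
    (hx₁ : x₁ ∈ Set.Ioo (0:ℝ) 1) (hx₂ : x₂ ∈ Set.Ioo (0:ℝ) 1)
    (h₁ : (∫ t in (0:ℝ)..x₁, (1 - t ^ q) ^ (-(1 / p₁))) = y)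
    (h₂ : (∫ t in (0:ℝ)..x₂, (1 - t ^ q) ^ (-(1 / p₂))) = y) :
    x₁ < x₂ := by
  by_contra hcon
  push_neg at hcon
  have hq0 : 0 < q := lt_trans one_pos hq
  obtain ⟨hx₂0, hx₂1⟩ := hx₂
  obtain ⟨hx₁0, hx₁1⟩ := hx₁
  have hc₁ := sinpq_cont q p₁ x₁ hq0 hx₁1
  have hc₁' := sinpq_cont q p₁ x₂ hq0 hx₂1
  have hc₂ := sinpq_cont q p₂ x₂ hq0 hx₂1
  have hexp : -(1 / p₁) < -(1 / p₂) := by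
    have := one_div_lt_one_div_of_lt (lt_trans one_pos hp₁) hp
    linarith
  -- strict inequality on [0, x₂]
  have hlt : (∫ t in (0:ℝ)..x₂, (1 - t ^ q) ^ (-(1 / p₂)))
      < ∫ t in (0:ℝ)..x₂, (1 - t ^ q) ^ (-(1 / p₁)) := by
    apply intervalIntegral.integral_lt_integral_of_continuousOn_of_le_of_exists_lt hx₂0 hc₂ hc₁'
    · intro t ht
      have ht1 : t ^ q < 1 :=
        Real.rpow_lt_one (le_of_lt ht.1) (lt_of_le_of_lt ht.2 hx₂1) hq0
      have ht0 : 0 < t ^ q := Real.rpow_pos_of_pos ht.1 q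
      exact le_of_lt (Real.rpow_lt_rpow_of_exponent_gt (by linarith) (by linarith) hexp)
    · refine ⟨x₂, ⟨le_of_lt hx₂0, le_refl _⟩, ?_⟩
      have ht1 : x₂ ^ q < 1 := Real.rpow_lt_one (le_of_lt hx₂0) hx₂1 hq0
      have ht0 : 0 < x₂ ^ q := Real.rpow_pos_of_pos hx₂0 q
      exact Real.rpow_lt_rpow_of_exponent_gt (by linarith) (by linarith) hexp
  -- monotonicity in the upper limit
  have hmono : (∫ t in (0:ℝ)..x₂, (1 - t ^ q) ^ (-(1 / p₁)))
      ≤ ∫ t in (0:ℝ)..x₁, (1 - t ^ q) ^ (-(1 / p₁)) := by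
    apply intervalIntegral.integral_mono_interval (le_refl (0:ℝ)) (le_of_lt hx₂0) hcon
    · filter_upwards [ae_restrict_mem measurableSet_Ioc] with t ht
      have ht1 : t ^ q < 1 :=
        Real.rpow_lt_one (le_of_lt ht.1) (lt_of_lt_of_le (lt_of_le_of_lt ht.2 hx₁1) le_rfl) hq0
      exact Real.rpow_nonneg (by linarith) _
    · exact hc₁.intervalIntegrable_of_Icc (le_of_lt hx₁0)
  rw [h₁, h₂] at *
  linarith
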